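/- Let n, m be finite nonempty sets, q : n → ℝ≥0, λ, μ, γ, ε as in the capacity-region assumption, and suppose j* is MaxWeight-optimal. If additionally E[drift] ≤ 2Σ_i q(i)(λ(i) − μ(i,j*)) + ℓ²·|n| for some ℓ ≥ 0, then E[drift] ≤ −2ε·(min_i λ(i))·Σ_i q(i) + ℓ²·|n|. -/
import Mathlib


theorem maxweight_drift_bound
    {n m : Type*} [Fintype n] [Fintype m] [Nonempty n] [Nonempty m]
    (q lam : n → ℝ) (μ : n → m → ℝ) (γ : m → ℝ) (ε ℓ : ℝ)
    (hq : ∀ i, 0 ≤ q i) (hlam : ∀ i, 0 ≤ lam i)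
    (hμ : ∀ i j, 0 ≤ μ i j) (hγ : ∀ j, 0 ≤ γ j)
    (hγsum : ∑ j, γ j = 1) (hε : 0 < ε) (hℓ : 0 ≤ ℓ)
    (hcap : ∀ i, (1 + ε) * lam i ≤ ∑ j, γ j * μ i j)
    (jstar : m) (hmax : ∀ j, ∑ i, q i * μ i j ≤ ∑ i, q i * μ i jstar)
    (drift : ℝ)
    (hdrift : drift ≤ 2 * ∑ i, q i * (lam i - μ i jstar) + ℓ ^ 2 * Fintype.card n) :
    drift ≤ -2 * ε * (Finset.univ.inf' Finset.univ_nonempty lam) * (∑ i, q i)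
      + ℓ ^ 2 * Fintype.card n := by
  set L := Finset.univ.inf' Finset.univ_nonempty lam with hL
  have hkey : (1 + ε) * ∑ i, q i * lam i ≤ ∑ i, q i * μ i jstar := by
    calc (1 + ε) * ∑ i, q i * lam i = ∑ i, q i * ((1 + ε) * lam i) := by
          rw [Finset.mul_sum]; congr 1; ext i; ring
      _ ≤ ∑ i, q i * (∑ j, γ j * μ i j) := by
          exact Finset.sum_le_sum fun i _ => mul_le_mul_of_nonneg_left (hcap i) (hq i)
      _ = ∑ j, γ j * ∑ i, q i * μ i j := by
          simp_rw [Finset.mul_sum]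
          rw [Finset.sum_comm]
          congr 1; ext j; congr 1; ext i; ring
      _ ≤ ∑ j, γ j * ∑ i, q i * μ i jstar :=
          Finset.sum_le_sum fun j _ => mul_le_mul_of_nonneg_left (hmax j) (hγ j)
      _ = ∑ i, q i * μ i jstar := by rw [← Finset.sum_mul, hγsum, one_mul]
  have h2 : ∑ i, q i * (lam i - μ i jstar) ≤ -ε * ∑ i, q i * lam i := by
    have : ∑ i, q i * (lam i - μ i jstar)
        = ∑ i, q i * lam i - ∑ i, q i * μ i jstar := by
      rw [← Finset.sum_sub_distrib]; congr 1; ext i; ring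
    rw [this]; nlinarith [hkey]
  have h3 : L * ∑ i, q i ≤ ∑ i, q i * lam i := by
    calc L * ∑ i, q i = ∑ i, q i * L := by
          rw [Finset.mul_sum]; exact Finset.sum_congr rfl fun i _ => mul_comm _ _
      _ ≤ ∑ i, q i * lam i := Finset.sum_le_sum fun i _ =>
          mul_le_mul_of_nonneg_left (Finset.inf'_le _ (Finset.mem_univ i)) (hq i)
  calc drift ≤ 2 * ∑ i, q i * (lam i - μ i jstar) + ℓ ^ 2 * Fintype.card n := hdrift
    _ ≤ 2 * (-ε * ∑ i, q i * lam i) + ℓ ^ 2 * Fintype.card n := by nlinarith [h2]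
    _ ≤ -2 * ε * L * ∑ i, q i + ℓ ^ 2 * Fintype.card n := by nlinarith [h3, hε]
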